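/- Let X ⊆ ℕ be infinite. Then U₁(X) holds if and only if for every infinite ultimately periodic set Y ⊆ ℕ there exist y, y' ∈ Y with y < y' such that no element of X lies strictly between y and y'. -/
import Mathlib


/-- `x < x'` are consecutive elements of `X`. -/
def ConsecutiveIn (X : Set ℕ) (x x' : ℕ) : Prop :=
  x ∈ X ∧ x' ∈ X ∧ x < x' ∧ ∀ z ∈ X, ¬(x < z ∧ z < x')

/-- The predicate `U₁(X)`: for every `k` there are consecutive positions of `X`
at distance at least `k`. -/
def U₁ (X : Set ℕ) : Prop :=
  ∀ k : ℕ, ∃ x x', ConsecutiveIn X x x' ∧ k ≤ x' - x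

/-- `Y` is ultimately periodic. -/
def UltimatelyPeriodic (Y : Set ℕ) : Prop :=
  ∃ p N : ℕ, 1 ≤ p ∧ ∀ n ≥ N, (n ∈ Y ↔ n + p ∈ Y)

/-- Auxiliary: there is a multiple of the progression `m + j*p` just above `x`. -/
lemma exists_mult_above (p m : ℕ) (hp : 1 ≤ p) :
    ∀ x : ℕ, ∃ j : ℕ, x < m + j * p ∧ m + j * p ≤ x + m + p := by
  intro x
  induction x with
  | zero =>
    refine ⟨1, ?_, ?_⟩ <;> · have h1 : 1 * p = p := by ring
                             rw [h1]; omega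
  | succ x ih =>
    obtain ⟨j, h1, h2⟩ := ih
    by_cases h : x + 1 < m + j * p
    · exact ⟨j, h, by omega⟩
    · have hmul : (j + 1) * p = j * p + p := by ring
      refine ⟨j + 1, ?_, ?_⟩ <;> · rw [hmul]; omega

theorem stmt7 (X : Set ℕ) (hX : X.Infinite) :
    U₁ X ↔
      ∀ Y : Set ℕ, Y.Infinite → UltimatelyPeriodic Y →
        ∃ y ∈ Y, ∃ y' ∈ Y, y < y' ∧ ∀ x ∈ X, ¬(y < x ∧ x < y') := by
  constructor
  · -- forward direction
    intro hU Y hYinf hYup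
    obtain ⟨p, N, hp, hper⟩ := hYup
    obtain ⟨m, hmY, hmN⟩ := hYinf.exists_gt N
    have hprog : ∀ j : ℕ, m + j * p ∈ Y := by
      intro j
      induction j with
      | zero => simpa using hmY
      | succ j ih =>
        have h1 : N ≤ m + j * p := by omega
        have h2 := (hper (m + j * p) h1).mp ih
        have heq : m + (j + 1) * p = m + j * p + p := by ring
        rw [heq]; exact h2
    obtain ⟨x, x', ⟨hxX, hx'X, hxx', hbetween⟩, hk⟩ := hU (m + 2 * p)
    obtain ⟨j, hxy, hyub⟩ := exists_mult_above p m hp x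
    have hx'ge : x + m + 2 * p ≤ x' := by omega
    have heq : m + (j + 1) * p = m + j * p + p := by ring
    refine ⟨m + j * p, hprog j, m + (j + 1) * p, hprog (j + 1), by omega, ?_⟩
    intro z hz ⟨h1, h2⟩
    exact hbetween z hz ⟨lt_trans hxy h1, by omega⟩
  · -- backward direction
    intro h k
    obtain ⟨x₀, hx₀⟩ := hX.nonempty
    set Y : Set ℕ := Set.range (fun j => x₀ + (k + 1) * j) with hYdef
    have hYinf : Y.Infinite := by
      apply Set.infinite_range_of_injective
      intro a b hab
      simp only at hab
      exact Nat.eq_of_mul_eq_mul_left (Nat.succ_pos k) (Nat.add_left_cancel hab)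
    have hYup : UltimatelyPeriodic Y := by
      refine ⟨k + 1, x₀, by omega, ?_⟩
      intro n hn
      constructor
      · rintro ⟨j, rfl⟩
        refine ⟨j + 1, ?_⟩
        show x₀ + (k+1)*(j+1) = x₀ + (k+1)*j + (k+1)
        ring
      · rintro ⟨j, hj⟩
        rcases j with _ | j
        · have hj' : x₀ + (k+1)*0 = n + (k+1) := hj
          simp only [Nat.mul_zero] at hj'; omega
        · refine ⟨j, ?_⟩
          have hj' : x₀ + (k+1)*(j+1) = n + (k+1) := hj
          show x₀ + (k+1)*j = n
          have : (k+1)*(j+1) = (k+1)*j + (k+1) := by ring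
          omega
    obtain ⟨y, hyY, y', hy'Y, hyy', hfree⟩ := h Y hYinf hYup
    obtain ⟨a, ha⟩ := hyY
    obtain ⟨b, hb⟩ := hy'Y
    simp only at ha hb
    have hab : a < b := by
      by_contra hle
      have : (k + 1) * b ≤ (k + 1) * a := Nat.mul_le_mul_left _ (by omega)
      omega
    have hky : y + (k + 1) ≤ y' := by
      have h1 : (k + 1) * (a + 1) ≤ (k + 1) * b := Nat.mul_le_mul_left _ (by omega)
      have h2 : (k+1)*(a+1) = (k+1)*a + (k+1) := by ring
      omega
    have hyx₀ : x₀ ≤ y := by omega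
    -- largest element of X below y
    haveI : DecidablePred (· ∈ X) := fun _ => Classical.dec _
    set S : Finset ℕ := (Finset.range (y + 1)).filter (· ∈ X) with hS
    have hSne : S.Nonempty :=
      ⟨x₀, Finset.mem_filter.mpr ⟨Finset.mem_range.mpr (by omega), hx₀⟩⟩
    set x := S.max' hSne with hx
    have hxS := S.max'_mem hSne
    rw [Finset.mem_filter, Finset.mem_range] at hxS
    obtain ⟨hxley, hxX⟩ := hxS
    have hmax : ∀ z ∈ X, z ≤ y → z ≤ x := by
      intro z hz hzy
      exact S.le_max' z (Finset.mem_filter.mpr ⟨Finset.mem_range.mpr (by omega), hz⟩)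
    -- least element of X above y
    haveI : DecidablePred (fun z => z ∈ X ∧ y < z) := fun _ => Classical.dec _
    have hex : ∃ z, z ∈ X ∧ y < z := by
      obtain ⟨z, hz, hz'⟩ := hX.exists_gt y
      exact ⟨z, hz, hz'⟩
    set x' := Nat.find hex with hx'
    obtain ⟨hx'X, hyx'⟩ := Nat.find_spec hex
    have hmin : ∀ z, z < x' → ¬(z ∈ X ∧ y < z) := fun z hz => Nat.find_min hex hz
    have hy'x' : y' ≤ x' := by
      by_contra hlt
      exact hfree x' hx'X ⟨hyx', by omega⟩
    refine ⟨x, x', ⟨hxX, hx'X, by omega, ?_⟩, by omega⟩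
    intro z hz ⟨h1, h2⟩
    by_cases hzy : z ≤ y
    · have := hmax z hz hzy; omega
    · exact hmin z h2 ⟨hz, by omega⟩
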